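/- Let F be a cone with a finite positively polarizable hyperbolic norm ‖·‖ and induced pairing ⟨v,w⟩ = ½(‖v+w‖² − ‖v‖² − ‖w‖²). Then the reverse Cauchy–Schwarz inequality holds: ⟨v,w⟩ ≥ ‖v‖‖w‖ for all v,w ∈ F, with equality if and only if ‖v+w‖ = ‖v‖ + ‖w‖. -/
import Mathlib


/-- A linear cone over `ℝ`: a commutative cancellative monoid with scalar
multiplication by real numbers, subject to the usual axioms for nonnegative scalars. -/
class RealLinearCone (F : Type*) [AddCancelCommMonoid F] where
  csmul : ℝ → F → F
  csmul_add : ∀ {a : ℝ}, 0 ≤ a → ∀ v w : F, csmul a (v + w) = csmul a v + csmul a w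
  add_csmul : ∀ {a b : ℝ}, 0 ≤ a → 0 ≤ b → ∀ v : F, csmul (a + b) v = csmul a v + csmul b v
  mul_csmul : ∀ {a b : ℝ}, 0 ≤ a → 0 ≤ b → ∀ v : F, csmul a (csmul b v) = csmul (a * b) v
  one_csmul : ∀ v : F, csmul 1 v = v

/-- The pairing induced by a (finite-valued) hyperbolic norm via polarization:
`⟨v,w⟩ = ½(‖v+w‖² - ‖v‖² - ‖w‖²)`. -/
noncomputable def hInner {F : Type*} [AddCancelCommMonoid F] (nn : F → ℝ) (v w : F) : ℝ :=
  ((nn (v + w)) ^ 2 - (nn v) ^ 2 - (nn w) ^ 2) / 2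

/-- Reverse Cauchy–Schwarz for the pairing induced by a finite positively
polarizable hyperbolic norm: `⟨v,w⟩ ≥ ‖v‖‖w‖`, with equality iff `‖v+w‖ = ‖v‖+‖w‖`. -/
theorem hInner_reverse_cauchy_schwarz {F : Type*} [AddCancelCommMonoid F] [RealLinearCone F]
    (nn : F → ℝ)
    (hproper : ∀ v w : F, v + w = 0 → v = 0)
    (hnonneg : ∀ v : F, 0 ≤ nn v)
    (hrev : ∀ v w : F, nn v + nn w ≤ nn (v + w))
    (hhom : ∀ a : ℝ, 0 ≤ a → ∀ v : F, nn (RealLinearCone.csmul a v) = a * nn v)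
    (hpol : ∀ v w : F, (nn (v + RealLinearCone.csmul 2 w)) ^ 2 + (nn v) ^ 2
      = 2 * (nn (v + w)) ^ 2 + 2 * (nn w) ^ 2) :
    ∀ v w : F, nn v * nn w ≤ hInner nn v w ∧
      (hInner nn v w = nn v * nn w ↔ nn (v + w) = nn v + nn w) := by
  intro v w
  have h1 := hrev v w
  have h2 := hnonneg v
  have h3 := hnonneg w
  have h4 := hnonneg (v + w)
  constructor
  · unfold hInner; nlinarith
  · constructor
    · intro h
      unfold hInner at h
      nlinarith
    · intro h
      unfold hInner
      rw [h]; ring
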